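/- Let Δ be a complete simplicial fan in ℝ^d with ray generators v_1,…,v_n, and for u ∈ ℝ^d let [u] ∈ ℝ^n be the coefficient vector of u in the generators of the minimal cone of Δ containing u (so u = Σ_i [u]_i v_i with at most d nonzero nonnegative coefficients, and h_{P(h)}(u) = ⟨h,[u]⟩ for all h with P(h) ∈ P(Δ)). Set c^Δ = max_{u ∈ S^{d−1}} max_i [u]_i. Then for all polytopes P(h), P(h') in the deformation cone P(Δ), the Hausdorff distance satisfies d_H(P(h), P(h')) ≤ √d · c^Δ · ‖h − h'‖. -/

import Mathlib

open scoped RealInnerProductSpace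

lemma infDist_le_of_support {E : Type*} [NormedAddCommGroup E] [InnerProductSpace ℝ E]
    [CompleteSpace E] {B : Set E} (hconv : Convex ℝ B) (hcl : IsClosed B)
    {x : E} {ε : ℝ} (hε : 0 ≤ ε) (S : E → ℝ)
    (hS : ∀ u, IsLUB ((fun z => ⟪z, u⟫) '' B) (S u))
    (hx : ∀ u, ‖u‖ = 1 → ⟪x, u⟫ ≤ S u + ε) :
    Metric.infDist x B ≤ ε := by
  have hne : B.Nonempty := by
    rcases B.eq_empty_or_nonempty with hB | hB
    · exfalso
      have h1 : S 0 ≤ S 0 - 1 := (hS 0).2 (by intro a ha; simp [hB] at ha)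
      linarith
    · exact hB
  obtain ⟨y, hyB, hy⟩ := exists_norm_eq_iInf_of_complete_convex hne hcl.isComplete hconv x
  have hproj : ∀ w ∈ B, ⟪x - y, w - y⟫ ≤ 0 :=
    (norm_eq_iInf_iff_real_inner_le_zero hconv hyB).1 hy
  have hle : Metric.infDist x B ≤ ‖x - y‖ := by
    simpa [dist_eq_norm] using Metric.infDist_le_dist_of_mem hyB
  rcases eq_or_ne x y with heq | hne'
  · simpa [heq] using hle.trans (by simp [heq, hε])
  refine hle.trans ?_
  have hr0 : (0:ℝ) < ‖x - y‖ := norm_pos_iff.2 (sub_ne_zero.mpr hne')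
  set r := ‖x - y‖ with hr
  set u := r⁻¹ • (x - y) with hu
  have hu1 : ‖u‖ = 1 := by
    rw [hu, norm_smul, norm_inv, norm_norm, ← hr, inv_mul_cancel₀ hr0.ne']
  have hxy : ⟪x - y, u⟫ = r := by
    rw [hu, real_inner_smul_right, real_inner_self_eq_norm_sq, ← hr]
    field_simp
  have hub : S u ≤ ⟪y, u⟫ := by
    refine (hS u).2 ?_
    rintro _ ⟨w, hw, rfl⟩
    have h1 : ⟪w - y, u⟫ ≤ 0 := by
      rw [hu, real_inner_smul_right]
      have := hproj w hw
      rw [real_inner_comm] at this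
      exact mul_nonpos_of_nonneg_of_nonpos (by positivity) this
    have h2 : ⟪w - y, u⟫ = ⟪w, u⟫ - ⟪y, u⟫ := inner_sub_left _ _ _
    linarith
  have hxu : ⟪x, u⟫ ≤ S u + ε := hx u hu1
  have h3 : ⟪x - y, u⟫ = ⟪x, u⟫ - ⟪y, u⟫ := inner_sub_left _ _ _
  linarith [hxy ▸ h3]


/-- Lemma 2.3: if `Δ` is a complete simplicial fan with ray generators `v_1, …, v_n`,
`[u] = br u` denotes the coefficient vector of `u` in the generators of its carrier cone
(nonnegative, at most `d` nonzero entries, `u = Σ_i [u]_i v_i`), `c = c^Δ` bounds all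
coordinates `[u]_i` for unit vectors `u`, and `P(h), P(h')` lie in the deformation cone
`P(Δ)` (so their support functions evaluate as `h_{P(h)}(u) = ⟨h,[u]⟩`), then
`d_H(P(h), P(h')) ≤ √d · c^Δ · ‖h − h'‖`. -/
theorem hausdorffDist_le_of_deformation_cone
    {d n : ℕ} (v : Fin n → EuclideanSpace ℝ (Fin d))
    (br : EuclideanSpace ℝ (Fin d) → Fin n → ℝ)
    (hrep : ∀ u, u = ∑ i, br u i • v i)
    (hnonneg : ∀ u i, 0 ≤ br u i)
    (hsparse : ∀ u, (Finset.univ.filter fun i => br u i ≠ 0).card ≤ d)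
    (c : ℝ)
    (hc : ∀ u ∈ Metric.sphere (0 : EuclideanSpace ℝ (Fin d)) 1, ∀ i, br u i ≤ c)
    (h h' : EuclideanSpace ℝ (Fin n))
    (P : EuclideanSpace ℝ (Fin n) → Set (EuclideanSpace ℝ (Fin d)))
    (hPdef : ∀ g, P g = {x | ∀ i, ⟪v i, x⟫ ≤ g i})
    (hsupp : ∀ u, IsLUB ((fun x => ⟪x, u⟫) '' P h) (∑ i, h i * br u i))
    (hsupp' : ∀ u, IsLUB ((fun x => ⟪x, u⟫) '' P h') (∑ i, h' i * br u i)) :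
    Metric.hausdorffDist (P h) (P h') ≤ Real.sqrt d * c * ‖h - h'‖ := by
  set ε : ℝ := Real.sqrt d * c * ‖h - h'‖ with hεdef
  -- nonnegativity of c for each unit vector situation, and of ε
  have hcnn : ∀ u : EuclideanSpace ℝ (Fin d), ‖u‖ = 1 → 0 ≤ c := by
    intro u hu
    have hn : 0 < n := by
      rcases Nat.eq_zero_or_pos n with hn0 | hn0
      · exfalso
        have := hrep u
        subst hn0
        simp at this
        rw [this] at hu
        simp at hu
      · exact hn0
    have h1 := hc u (by simpa [Metric.mem_sphere, dist_eq_norm] using hu) ⟨0, hn⟩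
    exact le_trans (hnonneg u ⟨0, hn⟩) h1
  have hε0 : 0 ≤ ε := by
    rcases Nat.eq_zero_or_pos d with hd0 | hd0
    · simp [hεdef, hd0]
    · have hc0 : 0 ≤ c := by
        refine hcnn (EuclideanSpace.single ⟨0, hd0⟩ 1) ?_
        simp [EuclideanSpace.norm_single]
      exact mul_nonneg (mul_nonneg (Real.sqrt_nonneg _) hc0) (norm_nonneg _)
  -- the key support bound
  have hkey : ∀ u : EuclideanSpace ℝ (Fin d), ‖u‖ = 1 →
      |∑ i, h i * br u i - ∑ i, h' i * br u i| ≤ ε := by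
    intro u hu
    have hc0 : 0 ≤ c := hcnn u hu
    set w : EuclideanSpace ℝ (Fin n) := WithLp.toLp 2 (fun i => br u i) with hw
    have h1 : ∑ i, h i * br u i - ∑ i, h' i * br u i = ⟪h - h', w⟫ := by
      rw [PiLp.inner_apply]
      simp only [RCLike.inner_apply, conj_trivial]
      rw [← Finset.sum_sub_distrib]
      refine Finset.sum_congr rfl fun i _ => ?_
      simp [hw, sub_mul]
      ring
    have h2 : ‖w‖ ≤ Real.sqrt d * c := by
      rw [EuclideanSpace.norm_eq]
      have h3 : ∑ i, ‖w i‖ ^ 2 ≤ (d : ℝ) * c ^ 2 := by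
        have h4 : ∑ i, ‖w i‖ ^ 2
            = ∑ i ∈ Finset.univ.filter (fun i => br u i ≠ 0), ‖w i‖ ^ 2 := by
          refine (Finset.sum_subset (Finset.filter_subset _ _) ?_).symm
          intro i _ hi
          simp only [Finset.mem_filter, Finset.mem_univ, true_and, not_not] at hi
          simp [hw, hi]
        rw [h4]
        calc ∑ i ∈ Finset.univ.filter (fun i => br u i ≠ 0), ‖w i‖ ^ 2
            ≤ (Finset.univ.filter (fun i => br u i ≠ 0)).card • (c ^ 2) := by
              refine Finset.sum_le_card_nsmul _ _ _ fun i _ => ?_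
              rw [hw]
              simp only [Real.norm_eq_abs, sq_abs, PiLp.toLp_apply]
              exact pow_le_pow_left₀ (hnonneg u i)
                (hc u (by simpa [Metric.mem_sphere, dist_eq_norm] using hu) i) 2
          _ ≤ (d : ℝ) * c ^ 2 := by
              rw [nsmul_eq_mul]
              exact mul_le_mul_of_nonneg_right (by exact_mod_cast hsparse u) (by positivity)
      calc Real.sqrt (∑ i, ‖w i‖ ^ 2) ≤ Real.sqrt ((d : ℝ) * c ^ 2) :=
            Real.sqrt_le_sqrt h3
        _ = Real.sqrt d * c := by
            rw [Real.sqrt_mul (Nat.cast_nonneg d), Real.sqrt_sq hc0]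
    calc |∑ i, h i * br u i - ∑ i, h' i * br u i| = |⟪h - h', w⟫| := by rw [h1]
      _ ≤ ‖h - h'‖ * ‖w‖ := abs_real_inner_le_norm _ _
      _ ≤ ‖h - h'‖ * (Real.sqrt d * c) :=
          mul_le_mul_of_nonneg_left h2 (norm_nonneg _)
      _ = ε := by rw [hεdef]; ring
  -- convexity and closedness of P g
  have hPconv : ∀ g, Convex ℝ (P g) := by
    intro g
    rw [hPdef]
    have : {x : EuclideanSpace ℝ (Fin d) | ∀ i, ⟪v i, x⟫ ≤ g i}
        = ⋂ i, {x | ⟪v i, x⟫ ≤ g i} := by ext x; simp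
    rw [this]
    exact convex_iInter fun i => convex_halfSpace_le
      ⟨fun a b => inner_add_right _ _ _, fun r a => real_inner_smul_right _ _ r⟩ _
  have hPcl : ∀ g, IsClosed (P g) := by
    intro g
    rw [hPdef]
    have : {x : EuclideanSpace ℝ (Fin d) | ∀ i, ⟪v i, x⟫ ≤ g i}
        = ⋂ i, {x | ⟪v i, x⟫ ≤ g i} := by ext x; simp
    rw [this]
    exact isClosed_iInter fun i =>
      isClosed_le (Continuous.inner continuous_const continuous_id) continuous_const
  refine Metric.hausdorffDist_le_of_infDist hε0 ?_ ?_
  · intro x hx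
    refine infDist_le_of_support (hPconv h') (hPcl h') hε0
      (fun u => ∑ i, h' i * br u i) hsupp' ?_
    intro u hu
    have h1 : ⟪x, u⟫ ≤ ∑ i, h i * br u i := (hsupp u).1 ⟨x, hx, rfl⟩
    have h2 := (abs_le.1 (hkey u hu)).2
    show ⟪x, u⟫ ≤ (∑ i, h' i * br u i) + ε
    linarith
  · intro x hx
    refine infDist_le_of_support (hPconv h) (hPcl h) hε0
      (fun u => ∑ i, h i * br u i) hsupp ?_
    intro u hu
    have h1 : ⟪x, u⟫ ≤ ∑ i, h' i * br u i := (hsupp' u).1 ⟨x, hx, rfl⟩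
    have h2 := (abs_le.1 (hkey u hu)).1
    show ⟪x, u⟫ ≤ (∑ i, h i * br u i) + ε
    linarith
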